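/- Every non-discrete Hausdorff topological group G has a sequence {U_n : n ∈ ℕ} of non-empty open subsets of G such that for every strictly increasing finite sequence i_1 < ... < i_k of natural numbers, the identity 0 does not belong to U_{i_1} + U_{i_2} + ... + U_{i_k}. -/

import Mathlib

open Pointwise

section Aux

variable {G : Type*} [AddGroup G] [TopologicalSpace G] [IsTopologicalAddGroup G] [T2Space G]

/-- Key step: inside any open neighborhood `V` of `0`, we can find a point `a`
and a smaller symmetric open neighborhood `W` of `0` such that `a` avoids
`W + W` while `a + W + W ⊆ V`. -/
lemma aux_step (hnd : ¬ DiscreteTopology G) (V : Set G) (hV : IsOpen V) (h0 : (0 : G) ∈ V) :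
    ∃ (a : G) (W : Set G), IsOpen W ∧ (0 : G) ∈ W ∧ (∀ x ∈ W, -x ∈ W) ∧ W ⊆ V ∧
      (∀ x ∈ W, ∀ y ∈ W, a ≠ x + y) ∧ (∀ x ∈ W, ∀ y ∈ W, a + (x + y) ∈ V) := by
  obtain ⟨a, haV, ha0⟩ : ∃ a ∈ V, a ≠ 0 := by
    by_contra h
    push_neg at h
    apply hnd
    apply discreteTopology_of_isOpen_singleton_zero
    have : V = {0} := Set.Subset.antisymm (fun x hx => h x hx) (by simpa using h0)
    rwa [this] at hV
  set N : Set G := ((a + ·) ⁻¹' V) ∩ {a}ᶜ ∩ V with hN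
  have hNopen : IsOpen N :=
    (((continuous_add_left a).isOpen_preimage _ hV).inter (isClosed_singleton.isOpen_compl)).inter
      hV
  have hN0 : (0 : G) ∈ N := by
    refine ⟨⟨?_, ?_⟩, h0⟩
    · simpa using haV
    · simpa using ha0.symm
  obtain ⟨W', hW'open, hW'0, hW'add⟩ :=
    exists_open_nhds_zero_add_subset (hNopen.mem_nhds hN0)
  refine ⟨a, W' ∩ -W', hW'open.inter hW'open.neg, ⟨hW'0, by simpa using hW'0⟩, ?_, ?_, ?_, ?_⟩
  · rintro x ⟨hx1, hx2⟩
    exact ⟨hx2, by simpa using hx1⟩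
  · intro x hx
    have : x + 0 ∈ N := hW'add (Set.add_mem_add hx.1 hW'0)
    simpa using this.2
  · intro x hx y hy h
    have : x + y ∈ N := hW'add (Set.add_mem_add hx.1 hy.1)
    exact this.1.2 (by simp [← h])
  · intro x hx y hy
    have : x + y ∈ N := hW'add (Set.add_mem_add hx.1 hy.1)
    exact this.1.1

/-- The recursively chosen decreasing sequence of neighborhoods of `0`. -/
noncomputable def auxV (hnd : ¬ DiscreteTopology G) : ℕ → {V : Set G // IsOpen V ∧ (0 : G) ∈ V}
  | 0 => ⟨Set.univ, isOpen_univ, trivial⟩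
  | n + 1 =>
    ⟨(aux_step hnd (auxV hnd n).1 (auxV hnd n).2.1 (auxV hnd n).2.2).choose_spec.choose,
      (aux_step hnd (auxV hnd n).1 (auxV hnd n).2.1
        (auxV hnd n).2.2).choose_spec.choose_spec.1,
      (aux_step hnd (auxV hnd n).1 (auxV hnd n).2.1
        (auxV hnd n).2.2).choose_spec.choose_spec.2.1⟩

/-- The recursively chosen points. -/
noncomputable def auxA (hnd : ¬ DiscreteTopology G) (n : ℕ) : G :=
  (aux_step hnd (auxV hnd n).1 (auxV hnd n).2.1 (auxV hnd n).2.2).choose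

lemma auxV_spec (hnd : ¬ DiscreteTopology G) (n : ℕ) :
    (∀ x ∈ (auxV hnd (n + 1)).1, -x ∈ (auxV hnd (n + 1)).1) ∧
    (auxV hnd (n + 1)).1 ⊆ (auxV hnd n).1 ∧
    (∀ x ∈ (auxV hnd (n + 1)).1, ∀ y ∈ (auxV hnd (n + 1)).1, auxA hnd n ≠ x + y) ∧
    (∀ x ∈ (auxV hnd (n + 1)).1, ∀ y ∈ (auxV hnd (n + 1)).1,
      auxA hnd n + (x + y) ∈ (auxV hnd n).1) := by
  have h := (aux_step hnd (auxV hnd n).1 (auxV hnd n).2.1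
    (auxV hnd n).2.2).choose_spec.choose_spec
  exact ⟨h.2.2.1, h.2.2.2.1, h.2.2.2.2.1, h.2.2.2.2.2⟩

lemma auxV_antitone (hnd : ¬ DiscreteTopology G) {m n : ℕ} (h : m ≤ n) :
    (auxV hnd n).1 ⊆ (auxV hnd m).1 := by
  induction n with
  | zero => simp [Nat.le_zero.mp h]
  | succ n ih =>
    rcases Nat.lt_or_ge m (n + 1) with hm | hm
    · exact ((auxV_spec hnd n).2.1).trans (ih (Nat.lt_succ_iff.mp hm))
    · have : m = n + 1 := le_antisymm h hm
      subst this
      exact Set.Subset.rfl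

end Aux

/-- Every non-discrete Hausdorff topological group has a sequence of non-empty
open sets such that `0` is not in the sum of any finite subfamily indexed by a
strictly increasing sequence. -/
theorem exists_open_sets_zero_not_in_sums {G : Type*} [AddGroup G]
    [TopologicalSpace G] [IsTopologicalAddGroup G] [T2Space G]
    (hnd : ¬ DiscreteTopology G) :
    ∃ U : ℕ → Set G,
      (∀ n, IsOpen (U n) ∧ (U n).Nonempty) ∧
      ∀ (k : ℕ) (i : Fin (k + 1) → ℕ), StrictMono i →
        (0 : G) ∉ (List.ofFn fun j : Fin (k + 1) => U (i j)).sum := by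
  classical
  set a : ℕ → G := auxA hnd with ha
  set V : ℕ → Set G := fun n => (auxV hnd n).1 with hV
  refine ⟨fun n => {a n} + V (n + 1), ?_, ?_⟩
  · intro n
    constructor
    · exact IsOpen.add_left (auxV hnd (n + 1)).2.1
    · exact ⟨a n + 0, Set.add_mem_add rfl (auxV hnd (n + 1)).2.2⟩
  · -- main subset lemma
    have key : ∀ (k : ℕ) (i : Fin (k + 1) → ℕ), StrictMono i →
        ∀ z ∈ (List.ofFn fun j : Fin (k + 1) => ({a (i j)} + V (i j + 1))).sum,
          ∃ x ∈ V (i 0 + 1), ∃ y ∈ V (i 0 + 1), z = a (i 0) + (x + y) := by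
      intro k
      induction k with
      | zero =>
        intro i _ z hz
        simp only [List.ofFn_succ, List.ofFn_zero, List.sum_cons, List.sum_nil, add_zero] at hz
        rw [Set.singleton_add] at hz
        obtain ⟨x, hx, rfl⟩ := hz
        exact ⟨x, hx, 0, (auxV hnd (i 0 + 1)).2.2, by rw [add_zero]⟩
      | succ k ih =>
        intro i hi z hz
        rw [List.ofFn_succ, List.sum_cons] at hz
        obtain ⟨u, hu, t, ht, rfl⟩ := hz
        have hi' : StrictMono (fun j : Fin (k + 1) => i j.succ) :=
          hi.comp Fin.strictMono_succ
        obtain ⟨x, hx, y, hy, rfl⟩ := ih (fun j => i j.succ) hi' t ht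
        -- t ∈ V (i 1)
        have htV : a (i (0 : Fin (k + 1)).succ) + (x + y) ∈ V (i (0 : Fin (k + 1)).succ) :=
          (auxV_spec hnd _).2.2.2 x hx y hy
        have h01 : (i 0 : ℕ) + 1 ≤ i (0 : Fin (k + 1)).succ := by
          have : i 0 < i (0 : Fin (k + 1)).succ := hi (by simp [Fin.lt_def])
          omega
        have htV' : a (i (0 : Fin (k + 1)).succ) + (x + y) ∈ V (i 0 + 1) :=
          auxV_antitone hnd h01 htV
        rw [Set.singleton_add] at hu
        obtain ⟨x', hx', rfl⟩ := hu
        exact ⟨x', hx', _, htV', by simp [add_assoc]⟩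
    intro k i hi h0
    obtain ⟨x, hx, y, hy, hxy⟩ := key k i hi 0 h0
    have hsym := (auxV_spec hnd (i 0)).1
    have : a (i 0) = -y + -x := by
      have h' : a (i 0) + (x + y) = 0 := hxy.symm
      rw [eq_neg_of_add_eq_zero_left h', neg_add_rev]
    exact (auxV_spec hnd (i 0)).2.2.1 (-y) (hsym y hy) (-x) (hsym x hx) this
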